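/- Let Φ be a quantum channel on M_d(ℂ) (completely positive, trace preserving). If every Φ_i is a quantum channel with |det Φ_i| = 1 for i = 1,…,n, then each Φ_i is a unitary conjugation, hence the composition Φ₁∘⋯∘Φₙ is a unitary conjugation and is not entanglement annihilating for any n. -/

import Mathlib

open Matrix
open scoped ComplexOrder Kronecker

/-- The Choi matrix of a linear map on matrices indexed by a finite type. -/
noncomputable def choiMatrix {ι : Type*} [Fintype ι] [DecidableEq ι]
    (Φ : Module.End ℂ (Matrix ι ι ℂ)) : Matrix (ι × ι) (ι × ι) ℂ :=
  fun p q => Φ (Matrix.single p.2 q.2 1) p.1 q.1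

/-- A state on a bipartite system is separable if it is a convex combination of
tensor products of positive semidefinite matrices. -/
def IsSepState {a b : ℕ} (ρ : Matrix (Fin a × Fin b) (Fin a × Fin b) ℂ) : Prop :=
  ∃ (n : ℕ) (c : Fin n → ℝ) (A : Fin n → Matrix (Fin a) (Fin a) ℂ)
    (B : Fin n → Matrix (Fin b) (Fin b) ℂ),
    (∀ i, 0 ≤ c i) ∧ (∀ i, (A i).PosSemidef) ∧ (∀ i, (B i).PosSemidef) ∧
      ρ = ∑ i, (c i : ℂ) • (A i ⊗ₖ B i)

/-- A channel on a bipartite system is entanglement annihilating if every state is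
mapped to a separable state. -/
def IsEA {a b : ℕ} (Φ : Module.End ℂ (Matrix (Fin a × Fin b) (Fin a × Fin b) ℂ)) : Prop :=
  ∀ ρ : Matrix (Fin a × Fin b) (Fin a × Fin b) ℂ,
    ρ.PosSemidef → Matrix.trace ρ = 1 → IsSepState (Φ ρ)


lemma aux_apply {ι : Type*} [Fintype ι] [DecidableEq ι]
    (Φ : Module.End ℂ (Matrix ι ι ℂ)) (K : Matrix ι ι ℂ)
    (h : ∀ i j k l, Φ (Matrix.single k l 1) i j = K i k * star (K j l)) :
    ∀ X, Φ X = K * X * Kᴴ := by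
  intro X
  have hX : X = ∑ p : ι × ι, X p.1 p.2 • Matrix.single p.1 p.2 1 := by
    rw [Fintype.sum_prod_type]
    conv_lhs => rw [Matrix.matrix_eq_sum_single X]
    refine Finset.sum_congr rfl fun k _ => Finset.sum_congr rfl fun l _ => ?_
    ext i j
    simp [Matrix.single, Matrix.smul_apply, mul_ite]
  conv_lhs => rw [hX, map_sum]
  ext i j
  rw [Matrix.sum_apply]
  simp only [_root_.map_smul, Matrix.smul_apply, h, smul_eq_mul]
  simp only [Matrix.mul_apply, Finset.sum_mul, Matrix.conjTranspose_apply]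
  rw [Finset.sum_comm, Fintype.sum_prod_type]
  exact Finset.sum_congr rfl fun l _ => Finset.sum_congr rfl fun k _ => by ring

lemma aux_key {ι : Type*} [Fintype ι] [DecidableEq ι] (M : Matrix ι ι ℂ) (k l : ι) :
    Matrix.trace (M * Matrix.single l k 1) = M k l := by
  rw [Matrix.trace]
  rw [Finset.sum_eq_single k]
  · simp [Matrix.diag]
  · intro i _ hik
    simp [Matrix.diag, Matrix.mul_single_apply_of_ne (hbj := hik)]
  · simp

lemma aux_unitary {ι : Type*} [Fintype ι] [DecidableEq ι]
    (Φ : Module.End ℂ (Matrix ι ι ℂ)) (K : Matrix ι ι ℂ)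
    (happ : ∀ X, Φ X = K * X * Kᴴ)
    (htp : ∀ X, Matrix.trace (Φ X) = Matrix.trace X) :
    K * Kᴴ = 1 := by
  rw [mul_eq_one_comm]
  ext k l
  have h1 := htp (Matrix.single l k 1)
  rw [happ, Matrix.trace_mul_comm, ← Matrix.mul_assoc, aux_key] at h1
  rw [h1]
  conv_lhs => rw [← Matrix.one_mul (Matrix.single l k 1)]
  rw [aux_key]

lemma aux_trace_eig {κ : Type*} [Fintype κ] [DecidableEq κ] {A : Matrix κ κ ℂ}
    (hA : A.IsHermitian) :
    Matrix.trace A = ((∑ i, hA.eigenvalues i : ℝ) : ℂ) ∧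
    Matrix.trace (A * A) = ((∑ i, (hA.eigenvalues i)^2 : ℝ) : ℂ) := by
  set U : Matrix κ κ ℂ := (hA.eigenvectorUnitary : Matrix κ κ ℂ) with hU
  have hUU : star U * U = 1 := Unitary.coe_star_mul_self hA.eigenvectorUnitary
  set D : Matrix κ κ ℂ := Matrix.diagonal (RCLike.ofReal ∘ hA.eigenvalues) with hD
  have hsp : A = U * D * star U := hA.spectral_theorem
  constructor
  · conv_lhs => rw [hsp]
    rw [Matrix.trace_mul_comm (U * D) (star U), ← Matrix.mul_assoc, hUU, Matrix.one_mul,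
      Matrix.trace_diagonal]
    push_cast
    rfl
  · have : A * A = U * (D * D) * star U := by
      conv_lhs => rw [hsp]
      rw [show U * D * star U * (U * D * star U) = U * D * (star U * U) * D * star U by
        noncomm_ring]
      rw [hUU, Matrix.mul_one]
      noncomm_ring
    rw [this, Matrix.trace_mul_comm (U * (D * D)) (star U), ← Matrix.mul_assoc, hUU,
      Matrix.one_mul, hD, Matrix.diagonal_mul_diagonal, Matrix.trace_diagonal]
    push_cast
    simp [pow_two]

lemma aux_fro {κ : Type*} [Fintype κ] (A : Matrix κ κ ℂ) :
    Matrix.trace (Aᴴ * A) = ((∑ pq : κ × κ, Complex.normSq (A pq.1 pq.2) : ℝ) : ℂ) := by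
  rw [Matrix.trace]
  rw [Fintype.sum_prod_type]
  push_cast
  simp only [Matrix.diag, Matrix.mul_apply, Matrix.conjTranspose_apply]
  rw [Finset.sum_comm]
  refine Finset.sum_congr rfl fun p _ => Finset.sum_congr rfl fun q _ => ?_
  rw [Complex.normSq_eq_conj_mul_self]
  rfl

lemma aux_amgm {κ : Type*} [Fintype κ] [Nonempty κ] (ν : κ → ℝ) (hν : ∀ i, 0 ≤ ν i)
    (hprod : ∏ i, ν i = 1) : (Fintype.card κ : ℝ) ≤ ∑ i, ν i := by
  set D : ℝ := (Fintype.card κ : ℝ) with hD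
  have hD0 : 0 < D := by
    rw [hD]
    exact_mod_cast Fintype.card_pos
  have hw : ∑ _i : κ, 1 / D = 1 := by
    rw [Finset.sum_const, Finset.card_univ, nsmul_eq_mul, ← hD]
    field_simp
  have h := Real.geom_mean_le_arith_mean_weighted Finset.univ (fun _ => 1 / D) ν
    (fun i _ => by positivity) hw (fun i _ => hν i)
  have hL : ∏ i, ν i ^ (1 / D) = 1 := by
    rw [Real.finset_prod_rpow Finset.univ ν (fun i _ => hν i) (1 / D), hprod, Real.one_rpow]
  rw [hL] at h
  have h2 : 1 ≤ (∑ i, ν i) / D := by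
    refine le_trans h (le_of_eq ?_)
    rw [Finset.sum_div]
    exact Finset.sum_congr rfl fun i _ => by ring
  have := mul_le_mul_of_nonneg_left h2 (le_of_lt hD0)
  rw [mul_one] at this
  calc D ≤ D * ((∑ i, ν i) / D) := this
  _ = ∑ i, ν i := by field_simp

lemma aux_rankone {κ : Type*} [Fintype κ] [DecidableEq κ] {C : Matrix κ κ ℂ}
    (hC : C.PosSemidef)
    (h : ∑ i, (hC.1.eigenvalues i) ^ 2 = (∑ i, hC.1.eigenvalues i) ^ 2) :
    ∃ w : κ → ℂ, ∀ p q, C p q = w p * star (w q) := by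
  set μ : κ → ℝ := hC.1.eigenvalues with hμ
  have hμ0 : ∀ i, 0 ≤ μ i := hC.eigenvalues_nonneg
  set U : Matrix κ κ ℂ := (hC.1.eigenvectorUnitary : Matrix κ κ ℂ) with hUdef
  have hentry : ∀ p q, C p q = ∑ r, (μ r : ℂ) * (U p r * star (U q r)) := by
    intro p q
    conv_lhs => rw [hC.1.spectral_theorem, Unitary.conjStarAlgAut_apply]
    rw [Matrix.mul_apply]
    refine Finset.sum_congr rfl fun r _ => ?_
    rw [Matrix.mul_diagonal]
    have : (star U) r q = star (U q r) := rfl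
    rw [this, show ((RCLike.ofReal ∘ hC.1.eigenvalues) r : ℂ) = ((μ r : ℝ) : ℂ) from rfl]
    ring
  -- cross terms vanish
  have hcross : ∀ i j, i ≠ j → μ i * μ j = 0 := by
    have hexp : (∑ i, μ i) ^ 2 = ∑ i, ∑ j, μ i * μ j := by
      rw [pow_two, Finset.sum_mul_sum]
    have hsplit : ∀ i : κ, ∑ j, μ i * μ j = μ i ^ 2 + ∑ j ∈ Finset.univ.erase i, μ i * μ j := by
      intro i
      rw [← Finset.add_sum_erase Finset.univ _ (Finset.mem_univ i), pow_two]
    have hzero : ∑ i, ∑ j ∈ Finset.univ.erase i, μ i * μ j = 0 := by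
      have : (∑ i, μ i) ^ 2 = ∑ i, μ i ^ 2 + ∑ i, ∑ j ∈ Finset.univ.erase i, μ i * μ j := by
        rw [hexp]
        rw [← Finset.sum_add_distrib]
        exact Finset.sum_congr rfl fun i _ => hsplit i
      linarith [h, this]
    intro i j hij
    have h1 : ∀ i ∈ Finset.univ, (0:ℝ) ≤ ∑ j ∈ Finset.univ.erase i, μ i * μ j :=
      fun i _ => Finset.sum_nonneg fun j _ => mul_nonneg (hμ0 i) (hμ0 j)
    have h2 := (Finset.sum_eq_zero_iff_of_nonneg h1).mp hzero i (Finset.mem_univ i)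
    have h3 : ∀ j ∈ Finset.univ.erase i, (0:ℝ) ≤ μ i * μ j :=
      fun j _ => mul_nonneg (hμ0 i) (hμ0 j)
    exact (Finset.sum_eq_zero_iff_of_nonneg h3).mp h2 j (Finset.mem_erase.mpr ⟨hij.symm, Finset.mem_univ j⟩)
  by_cases hex : ∃ j, μ j ≠ 0
  · obtain ⟨j, hj⟩ := hex
    refine ⟨fun p => (Real.sqrt (μ j) : ℂ) * U p j, fun p q => ?_⟩
    rw [hentry p q, Finset.sum_eq_single j]
    · have : (Real.sqrt (μ j) : ℂ) * Real.sqrt (μ j) = (μ j : ℂ) := by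
        rw [← Complex.ofReal_mul, Real.mul_self_sqrt (hμ0 j)]
      push_cast
      rw [star_mul']
      rw [show star ((Real.sqrt (μ j) : ℂ)) = (Real.sqrt (μ j) : ℂ) from Complex.conj_ofReal _]
      calc (μ j : ℂ) * (U p j * star (U q j))
          = ((Real.sqrt (μ j) : ℂ) * Real.sqrt (μ j)) * (U p j * star (U q j)) := by rw [this]
        _ = (Real.sqrt (μ j) : ℂ) * U p j * ((Real.sqrt (μ j) : ℂ) * star (U q j)) := by ring
    · intro r _ hr
      have : μ r = 0 := by
        have := hcross r j hr
        rcases mul_eq_zero.mp this with h' | h'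
        · exact h'
        · exact absurd h' hj
      rw [this]
      simp
    · simp
  · push_neg at hex
    refine ⟨0, fun p q => ?_⟩
    rw [hentry p q]
    simp [hex]
lemma channel_unitary {ι : Type*} [Fintype ι] [DecidableEq ι] [Nonempty ι]
    (Φ : Module.End ℂ (Matrix ι ι ℂ))
    (hcp : (choiMatrix Φ).PosSemidef)
    (htp : ∀ X, Matrix.trace (Φ X) = Matrix.trace X)
    (hdet : ‖LinearMap.det Φ‖ = 1) :
    ∃ U : Matrix ι ι ℂ, U * Uᴴ = 1 ∧ ∀ X, Φ X = U * X * Uᴴ := by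
  classical
  set C : Matrix (ι × ι) (ι × ι) ℂ := choiMatrix Φ with hCdef
  set μ : ι × ι → ℝ := hcp.1.eigenvalues with hμdef
  have hμ0 : ∀ i, 0 ≤ μ i := hcp.eigenvalues_nonneg
  -- the matrix of Φ
  set M : Matrix (ι × ι) (ι × ι) ℂ :=
    Matrix.of (fun p q => Φ (Matrix.single q.1 q.2 1) p.1 p.2) with hMdef
  have hM : Matrix.toLin (Matrix.stdBasis ℂ ι ι) (Matrix.stdBasis ℂ ι ι) M = Φ := by
    apply (Matrix.stdBasis ℂ ι ι).ext
    rintro ⟨k, l⟩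
    rw [Matrix.toLin_self]
    rw [Matrix.stdBasis_eq_single]
    ext i j
    rw [Matrix.sum_apply]
    rw [Fintype.sum_prod_type]
    rw [Finset.sum_eq_single i]
    · rw [Finset.sum_eq_single j]
      · simp [Matrix.stdBasis_eq_single]
        rfl
      · intro j' _ hj'
        simp [Matrix.stdBasis_eq_single, hj']
      · simp
    · intro i' _ hi'
      refine Finset.sum_eq_zero fun j' _ => ?_
      simp [Matrix.stdBasis_eq_single, hi']
    · simp
  have hdetM : ‖M.det‖ = 1 := by
    rw [← LinearMap.det_toLin (Matrix.stdBasis ℂ ι ι) M, hM]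
    exact hdet
  -- N = MᴴM
  have hN : (Mᴴ * M).PosSemidef := Matrix.posSemidef_conjTranspose_mul_self M
  set ν : ι × ι → ℝ := hN.1.eigenvalues with hνdef
  have hν0 : ∀ i, 0 ≤ ν i := hN.eigenvalues_nonneg
  have hνprod : ∏ i, ν i = 1 := by
    have h1 : (Mᴴ * M).det = ((∏ i, ν i : ℝ) : ℂ) := by
      rw [hN.1.det_eq_prod_eigenvalues]
      push_cast
      rfl
    have h2 : (Mᴴ * M).det = 1 := by
      rw [Matrix.det_mul, Matrix.det_conjTranspose]
      rw [show star M.det = (starRingEnd ℂ) M.det from rfl]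
      rw [← Complex.normSq_eq_conj_mul_self, ← Complex.sq_norm, hdetM]
      norm_num
    rw [h2] at h1
    exact_mod_cast h1.symm
  -- trace C = card ι
  have hμsum : ∑ i, μ i = (Fintype.card ι : ℝ) := by
    have h1 : Matrix.trace C = ((∑ i, μ i : ℝ) : ℂ) := (aux_trace_eig hcp.1).1
    have h2 : Matrix.trace C = (Fintype.card ι : ℂ) := by
      rw [Matrix.trace]
      have : ∀ p : ι × ι, Matrix.diag C p = Φ (Matrix.single p.2 p.2 1) p.1 p.1 := by
        intro p; rfl
      calc ∑ p, Matrix.diag C p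
          = ∑ k : ι, ∑ i : ι, Φ (Matrix.single k k 1) i i := by
            rw [Fintype.sum_prod_type]
            rw [Finset.sum_comm]
            exact Finset.sum_congr rfl fun k _ => Finset.sum_congr rfl fun i _ => this (i, k)
        _ = ∑ k : ι, Matrix.trace (Φ (Matrix.single k k 1)) := rfl
        _ = ∑ k : ι, Matrix.trace (Matrix.single k k (1:ℂ)) := by
            exact Finset.sum_congr rfl fun k _ => htp _
        _ = ∑ _k : ι, (1:ℂ) := by
            refine Finset.sum_congr rfl fun k _ => ?_
            rw [← Matrix.one_mul (Matrix.single k k (1:ℂ)), aux_key]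
            simp
        _ = (Fintype.card ι : ℂ) := by simp
    rw [h2] at h1
    exact_mod_cast h1.symm
  -- sum ν = sum μ²
  have hsum_eq : ∑ i, ν i = ∑ i, (μ i)^2 := by
    have h1 : Matrix.trace (Mᴴ * M) = ((∑ i, ν i : ℝ) : ℂ) := (aux_trace_eig hN.1).1
    have h2 : Matrix.trace (C * C) = ((∑ i, (μ i)^2 : ℝ) : ℂ) := (aux_trace_eig hcp.1).2
    have h3 : Matrix.trace (Cᴴ * C) = Matrix.trace (C * C) := by rw [hcp.1.eq]
    have h4 : (∑ pq : (ι × ι) × (ι × ι), Complex.normSq (M pq.1 pq.2))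
        = ∑ pq : (ι × ι) × (ι × ι), Complex.normSq (C pq.1 pq.2) := by
      apply Fintype.sum_equiv (Equiv.prodProdProdComm ι ι ι ι)
      rintro ⟨⟨i, j⟩, ⟨k, l⟩⟩
      rfl
    have h5 := aux_fro M
    have h6 := aux_fro C
    rw [h4, ← h6, h3, h2] at h5
    rw [h1] at h5
    exact_mod_cast h5
  -- AM-GM chain
  have hd2 : (Fintype.card (ι × ι) : ℝ) = (Fintype.card ι : ℝ)^2 := by
    rw [Fintype.card_prod]
    push_cast
    ring
  have hle1 : ∑ i, (μ i)^2 ≤ (∑ i, μ i)^2 := by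
    calc ∑ i, (μ i)^2 ≤ ∑ i, μ i * ∑ j, μ j := by
          refine Finset.sum_le_sum fun i _ => ?_
          rw [pow_two]
          exact mul_le_mul_of_nonneg_left
            (Finset.single_le_sum (fun j _ => hμ0 j) (Finset.mem_univ i)) (hμ0 i)
      _ = (∑ i, μ i)^2 := by rw [← Finset.sum_mul, pow_two]
  have hge : (Fintype.card (ι × ι) : ℝ) ≤ ∑ i, ν i := aux_amgm ν hν0 hνprod
  have hkey : ∑ i, (μ i)^2 = (∑ i, μ i)^2 := by
    refine le_antisymm hle1 ?_
    rw [hμsum, ← hd2, ← hsum_eq]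
    exact hge
  -- rank one
  obtain ⟨w, hw⟩ := aux_rankone hcp hkey
  set K : Matrix ι ι ℂ := Matrix.of (fun i k => w (i, k)) with hKdef
  have hK : ∀ i j k l, Φ (Matrix.single k l 1) i j = K i k * star (K j l) := by
    intro i j k l
    exact hw (i, k) (j, l)
  have happ := aux_apply Φ K hK
  exact ⟨K, aux_unitary Φ K happ htp, happ⟩
lemma aux_kron_psd {m n : Type*} [Fintype m] [Fintype n] [DecidableEq m] [DecidableEq n]
    {A : Matrix m m ℂ} {B : Matrix n n ℂ} (hA : A.PosSemidef) (hB : B.PosSemidef) :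
    (A ⊗ₖ B).PosSemidef := by
  exact hA.kronecker hB

lemma aux_smul_psd {n : Type*} [Fintype n] {M : Matrix n n ℂ} (hM : M.PosSemidef)
    {c : ℝ} (hc : 0 ≤ c) : ((c : ℂ) • M).PosSemidef := by
  refine Matrix.PosSemidef.of_dotProduct_mulVec_nonneg ?_ ?_
  · unfold Matrix.IsHermitian
    rw [Matrix.conjTranspose_smul, hM.1.eq]
    congr 1
    simp
  · intro x
    rw [Matrix.smul_mulVec, dotProduct_smul, smul_eq_mul]
    apply mul_nonneg _ (hM.dotProduct_mulVec_nonneg x)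
    exact_mod_cast hc

lemma exists_entangled {a b : ℕ} (ha : 2 ≤ a) (hb : 2 ≤ b) :
    ∃ σ : Matrix (Fin a × Fin b) (Fin a × Fin b) ℂ,
      σ.PosSemidef ∧ Matrix.trace σ = 1 ∧ ¬ IsSepState σ := by
  classical
  set i0 : Fin a := ⟨0, by omega⟩ with hi0
  set i1 : Fin a := ⟨1, by omega⟩ with hi1
  set j0 : Fin b := ⟨0, by omega⟩ with hj0
  set j1 : Fin b := ⟨1, by omega⟩ with hj1
  have hii : i0 ≠ i1 := by simp [hi0, hi1, Fin.ext_iff]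
  have hjj : j0 ≠ j1 := by simp [hj0, hj1, Fin.ext_iff]
  set P0 : Fin a × Fin b := (i0, j0) with hP0
  set P1 : Fin a × Fin b := (i1, j1) with hP1
  set ψ : Fin a × Fin b → ℂ :=
    fun p => (if p = P0 then 1 else 0) + (if p = P1 then 1 else 0) with hψ
  have hψP0 : ψ P0 = 1 := by simp [hψ, hP0, hP1, Prod.ext_iff, hii]
  have hψP1 : ψ P1 = 1 := by simp [hψ, hP0, hP1, Prod.ext_iff, hii.symm]
  have hψ01 : ψ (i0, j1) = 0 := by
    simp [hψ, hP0, hP1, Prod.ext_iff, hjj, hjj.symm, hii, hii.symm]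
  have hψ10 : ψ (i1, j0) = 0 := by
    simp [hψ, hP0, hP1, Prod.ext_iff, hjj, hjj.symm, hii, hii.symm]
  have hψstar : ∀ p, star (ψ p) = ψ p := by
    intro p
    simp only [hψ]
    by_cases h0 : p = P0 <;> by_cases h1 : p = P1 <;> simp [h0, h1]
  set σ : Matrix (Fin a × Fin b) (Fin a × Fin b) ℂ :=
    (1/2 : ℂ) • Matrix.vecMulVec ψ (star ψ) with hσ
  have hσapp : ∀ p q, σ p q = (1/2 : ℂ) * (ψ p * ψ q) := by
    intro p q
    simp [hσ, Matrix.vecMulVec_apply, Pi.star_apply, hψstar q]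
  have hσpsd : σ.PosSemidef := by
    rw [hσ, Matrix.vecMulVec_eq Unit, ← Matrix.conjTranspose_replicateCol]
    have : (0:ℝ) ≤ 1/2 := by norm_num
    have h2 : ((1/2 : ℝ) : ℂ) = (1/2 : ℂ) := by push_cast; ring
    rw [← h2]
    exact aux_smul_psd (Matrix.posSemidef_self_mul_conjTranspose _) this
  have hP01 : P0 ≠ P1 := by simp [hP0, hP1, Prod.ext_iff, hii]
  have hσtr : Matrix.trace σ = 1 := by
    rw [Matrix.trace]
    have hdiag : ∀ p, Matrix.diag σ p
        = (1/2 : ℂ) * ((if p = P0 then 1 else 0) + (if p = P1 then 1 else 0)) := by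
      intro p
      rw [Matrix.diag, hσapp p p]
      by_cases h0 : p = P0
      · have h1 : p ≠ P1 := by rw [h0]; exact hP01
        simp [h0, hψP0, h1, hP01]
      · by_cases h1 : p = P1
        · simp [h1, hψP1, hP01.symm, show P1 ≠ P0 from fun h => hP01 h.symm]
        · have : ψ p = 0 := by simp [hψ, h0, h1]
          simp [this, h0, h1]
    rw [Finset.sum_congr rfl fun p _ => hdiag p]
    rw [← Finset.mul_sum, Finset.sum_add_distrib]
    simp [Finset.sum_ite_eq']
    norm_num
  refine ⟨σ, hσpsd, hσtr, ?_⟩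
  rintro ⟨m, c, A, B, hc, hA, hB, hrep⟩
  set M : Matrix (Fin a × Fin b) (Fin a × Fin b) ℂ :=
    ∑ i, (c i : ℂ) • ((A i)ᵀ ⊗ₖ B i) with hM
  have hMpsd : M.PosSemidef := by
    rw [hM]
    refine Finset.sum_induction _ _ (fun x y hx hy => hx.add hy) Matrix.PosSemidef.zero ?_
    intro i _
    exact aux_smul_psd (aux_kron_psd (hA i).transpose (hB i)) (hc i)
  have hMent : ∀ i j k l, M (i, j) (k, l) = σ (k, j) (i, l) := by
    intro i j k l
    rw [hM, hrep]
    rw [Matrix.sum_apply, Matrix.sum_apply]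
    refine Finset.sum_congr rfl fun r _ => ?_
    simp only [Matrix.smul_apply, Matrix.kroneckerMap_apply, Matrix.transpose_apply,
      smul_eq_mul]
  -- the test vector
  set v : Fin a × Fin b → ℂ :=
    fun p => (if p = (i0, j1) then 1 else 0) - (if p = (i1, j0) then 1 else 0) with hv
  have he : ((i0, j1) : Fin a × Fin b) ≠ (i1, j0) := by simp [Prod.ext_iff, hii]
  have hrow : ∀ p, (M *ᵥ v) p = M p (i0, j1) - M p (i1, j0) := by
    intro p
    rw [Matrix.mulVec, dotProduct]
    simp only [hv, mul_sub, mul_ite, mul_one, mul_zero]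
    rw [Finset.sum_sub_distrib]
    simp [Finset.sum_ite_eq']
  have hQ : dotProduct (star v) (M *ᵥ v)
      = (M (i0, j1) (i0, j1) - M (i0, j1) (i1, j0))
        - (M (i1, j0) (i0, j1) - M (i1, j0) (i1, j0)) := by
    rw [dotProduct]
    have hsv : ∀ p, star v p * (M *ᵥ v) p
        = ((if p = (i0, j1) then 1 else 0) - (if p = (i1, j0) then 1 else 0)) * (M *ᵥ v) p := by
      intro p
      congr 1
      simp only [Pi.star_apply, hv]
      by_cases h0 : p = (i0, j1) <;> by_cases h1 : p = (i1, j0) <;> simp [h0, h1]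
    rw [Finset.sum_congr rfl fun p _ => hsv p]
    simp only [sub_mul, one_mul, ite_mul, zero_mul]
    rw [Finset.sum_sub_distrib]
    simp [Finset.sum_ite_eq']
    rw [hrow, hrow]
  have hQval : dotProduct (star v) (M *ᵥ v) = -1 := by
    rw [hQ, hMent, hMent, hMent, hMent]
    rw [hσapp, hσapp, hσapp, hσapp]
    rw [hψ01, hψ10]
    rw [show ((i1 : Fin a), (j1 : Fin b)) = P1 from rfl, show ((i0:Fin a), (j0:Fin b)) = P0 from rfl]
    rw [hψP0, hψP1]
    ring
  have := hMpsd.dotProduct_mulVec_nonneg v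
  rw [hQval] at this
  simp [Complex.le_def] at this
  linarith

lemma list_prod_conj {κ : Type*} [Fintype κ] [DecidableEq κ]
    (L : List (Module.End ℂ (Matrix κ κ ℂ)))
    (h : ∀ f ∈ L, ∃ U : Matrix κ κ ℂ, U * Uᴴ = 1 ∧ ∀ X, f X = U * X * Uᴴ) :
    ∃ U : Matrix κ κ ℂ, U * Uᴴ = 1 ∧ ∀ X, L.prod X = U * X * Uᴴ := by
  induction L with
  | nil =>
    refine ⟨1, by simp, fun X => ?_⟩
    show X = 1 * X * (1 : Matrix κ κ ℂ)ᴴ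
    rw [Matrix.conjTranspose_one, Matrix.one_mul, Matrix.mul_one]
  | cons f L ih =>
    obtain ⟨Uf, hUf, hf⟩ := h f (List.mem_cons_self)
    obtain ⟨UP, hUP, hP⟩ := ih (fun g hg => h g (List.mem_cons_of_mem _ hg))
    refine ⟨Uf * UP, ?_, fun X => ?_⟩
    · rw [Matrix.conjTranspose_mul]
      calc Uf * UP * (UPᴴ * Ufᴴ) = Uf * (UP * UPᴴ) * Ufᴴ := by noncomm_ring
        _ = 1 := by rw [hUP, Matrix.mul_one, hUf]
    · rw [List.prod_cons]
      have hfl : (f * L.prod) X = f (L.prod X) := rfl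
      rw [hfl, hP, hf, Matrix.conjTranspose_mul]
      noncomm_ring

lemma unitary_not_EA {a b : ℕ} (ha : 2 ≤ a) (hb : 2 ≤ b)
    (P : Module.End ℂ (Matrix (Fin a × Fin b) (Fin a × Fin b) ℂ))
    (U : Matrix (Fin a × Fin b) (Fin a × Fin b) ℂ)
    (hU : U * Uᴴ = 1) (happ : ∀ X, P X = U * X * Uᴴ) : ¬ IsEA P := by
  intro hEA
  obtain ⟨σ, hpsd, htr, hnsep⟩ := exists_entangled ha hb
  set ρ : Matrix (Fin a × Fin b) (Fin a × Fin b) ℂ := Uᴴ * σ * U with hρ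
  have hρpsd : ρ.PosSemidef := hpsd.conjTranspose_mul_mul_same U
  have hρtr : Matrix.trace ρ = 1 := by
    rw [hρ, Matrix.trace_mul_cycle, hU, Matrix.one_mul, htr]
  have hPρ : P ρ = σ := by
    rw [happ, hρ]
    calc U * (Uᴴ * σ * U) * Uᴴ = (U * Uᴴ) * σ * (U * Uᴴ) := by noncomm_ring
      _ = σ := by rw [hU, Matrix.one_mul, Matrix.mul_one]
  have := hEA ρ hρpsd hρtr
  rw [hPρ] at this
  exact hnsep this

/-- quantum channels Φ₁,…,Φₙ on a bipartite system with |det Φᵢ| = 1 are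
unitary conjugations, hence their composition is a unitary conjugation and is not
entanglement annihilating. -/
theorem stmt10 {a b : ℕ} (ha : 2 ≤ a) (hb : 2 ≤ b) (n : ℕ)
    (Φ : Fin n → Module.End ℂ (Matrix (Fin a × Fin b) (Fin a × Fin b) ℂ))
    (hcp : ∀ i, (choiMatrix (Φ i)).PosSemidef)
    (htp : ∀ i X, Matrix.trace (Φ i X) = Matrix.trace X)
    (hdet : ∀ i, ‖LinearMap.det (Φ i)‖ = 1) :
    (∀ i, ∃ U : Matrix (Fin a × Fin b) (Fin a × Fin b) ℂ,
        U * Uᴴ = 1 ∧ ∀ X, Φ i X = U * X * Uᴴ) ∧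
    (∃ U : Matrix (Fin a × Fin b) (Fin a × Fin b) ℂ,
        U * Uᴴ = 1 ∧ ∀ X, (List.ofFn Φ).prod X = U * X * Uᴴ) ∧
    ¬ IsEA ((List.ofFn Φ).prod) := by
  haveI : Nonempty (Fin a × Fin b) := ⟨(⟨0, by omega⟩, ⟨0, by omega⟩)⟩
  have hU : ∀ i, ∃ U : Matrix (Fin a × Fin b) (Fin a × Fin b) ℂ,
      U * Uᴴ = 1 ∧ ∀ X, Φ i X = U * X * Uᴴ :=
    fun i => channel_unitary (Φ i) (hcp i) (htp i) (hdet i)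
  have hprod : ∃ U : Matrix (Fin a × Fin b) (Fin a × Fin b) ℂ,
      U * Uᴴ = 1 ∧ ∀ X, (List.ofFn Φ).prod X = U * X * Uᴴ := by
    apply list_prod_conj
    intro f hf
    rw [List.mem_ofFn] at hf
    obtain ⟨i, rfl⟩ := hf
    exact hU i
  refine ⟨hU, hprod, ?_⟩
  obtain ⟨U, h1, h2⟩ := hprod
  exact unitary_not_EA ha hb _ U h1 h2
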